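/- Let L0 and L1 be relational languages and, for each t < 2, let K_t be a Fraïssé class of finite L_t-structures. Let M0 be a Fraïssé limit of K0 and M1 a Fraïssé limit of K1. Then K0 ⊠ K1 is a Fraïssé class and M0 ⊠ M1 is a Fraïssé limit of K0 ⊠ K1. -/
import Mathlib


/- Definitions following "Products of Classes of Finite Structures"
   (Guingona, Parnes, Scow). -/

open CategoryTheory FirstOrder FirstOrder.Language FirstOrder.Language.Structure

universe u v w w' u0 v0 u1 v1

namespace ProductsPaper

instance graphIsRelational : Language.graph.IsRelational :=
  fun _ => inferInstanceAs (IsEmpty Empty)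

/-- The induced structure on a subset, for a relational language. -/
instance setStructure (L : FirstOrder.Language.{u, v}) [L.IsRelational] {M : Type w}
    [L.Structure M] (s : Set M) : L.Structure s where
  funMap f _ := isEmptyElim f
  RelMap R x := RelMap R fun i => (x i : M)

/-- A class of structures: a set of bundled structures (with universes in `Type 0`). -/
abbrev StructClass (L : FirstOrder.Language.{u, v}) := Set (Bundled.{0} L.Structure)

variable {L : FirstOrder.Language.{u, v}}

/-- Every member of the class is finite. -/
def AllFinite (K : StructClass L) : Prop := ∀ A ∈ K, Finite A

/-- The class is closed under isomorphism. -/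
def IsoClosed (K : StructClass L) : Prop :=
  ∀ A ∈ K, ∀ B : Bundled.{0} L.Structure, Nonempty (A ≃[L] B) → B ∈ K

/-- The class `K` is indivisible: for every `A ∈ K` and `k ≥ 2` there is `B ∈ K` such that
every `k`-coloring of `B` admits a monochromatic embedded copy of `A`. -/
def Indivisible (K : StructClass L) : Prop :=
  ∀ A ∈ K, ∀ k : ℕ, 2 ≤ k → ∃ B ∈ K, ∀ c : B → Fin k,
    ∃ f : A ↪[L] B, ∃ i : Fin k, ∀ a : A, c (f a) = i

/-- The joint embedding property. -/
def JEP (K : StructClass L) : Prop :=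
  ∀ A ∈ K, ∀ B ∈ K, ∃ C ∈ K, Nonempty (A ↪[L] C) ∧ Nonempty (B ↪[L] C)

/-- The amalgamation property. -/
def AP (K : StructClass L) : Prop :=
  ∀ (A B₀ B₁ : Bundled.{0} L.Structure), A ∈ K → B₀ ∈ K → B₁ ∈ K →
    ∀ (f₀ : A ↪[L] B₀) (f₁ : A ↪[L] B₁),
      ∃ C ∈ K, ∃ (g₀ : B₀ ↪[L] C) (g₁ : B₁ ↪[L] C), g₀.comp f₀ = g₁.comp f₁

/-- The strong (disjoint) amalgamation property. -/
def SAP (K : StructClass L) : Prop :=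
  ∀ (A B₀ B₁ : Bundled.{0} L.Structure), A ∈ K → B₀ ∈ K → B₁ ∈ K →
    ∀ (f₀ : A ↪[L] B₀) (f₁ : A ↪[L] B₁),
      ∃ C ∈ K, ∃ (g₀ : B₀ ↪[L] C) (g₁ : B₁ ↪[L] C), g₀.comp f₀ = g₁.comp f₁ ∧
        Set.range g₀ ∩ Set.range g₁ = Set.range (g₀.comp f₀)

/-- The hereditary property: every substructure (equivalently, subset, since the language is
relational) of a member of the class is a member of the class. -/
def HereditaryC [L.IsRelational] (K : StructClass L) : Prop :=
  ∀ A ∈ K, ∀ s : Set A, (⟨s, setStructure L s⟩ : Bundled.{0} L.Structure) ∈ K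

/-- The age of a structure: the class of all finite structures embeddable in it. -/
def ageC (L : FirstOrder.Language.{u, v}) (M : Type w) [L.Structure M] : StructClass L :=
  {A | Finite A ∧ Nonempty (A ↪[L] M)}

/-- The proper subsets of `{0, …, n-1}`, indexing a disjoint amalgamation problem. -/
abbrev ProperSub (n : ℕ) := {p : Finset (Fin n) // p ≠ Finset.univ}

lemma inter_ne_univ {n : ℕ} (p q : ProperSub n) : p.1 ∩ q.1 ≠ Finset.univ := by
  intro h
  apply p.2
  apply Finset.eq_univ_of_forall
  intro x
  have hx : x ∈ p.1 ∩ q.1 := by rw [h]; exact Finset.mem_univ x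
  exact (Finset.mem_inter.mp hx).1

/-- The intersection of two proper subsets of `Fin n`, as a proper subset. -/
def interP {n : ℕ} (p q : ProperSub n) : ProperSub n := ⟨p.1 ∩ q.1, inter_ne_univ p q⟩

/-- The disjoint `n`-amalgamation property: every disjoint amalgamation system indexed by the
proper subsets of `{0, …, n-1}` extends to a disjoint amalgamation system indexed by all
subsets of `{0, …, n-1}`, i.e., it admits a top structure `C ∈ K` together with embeddings
commuting with the given system and satisfying the disjointness condition. -/
def DisjointNAmalg (K : StructClass L) (n : ℕ) : Prop :=
  ∀ (A : ProperSub n → Bundled.{0} L.Structure)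
    (f : ∀ p q : ProperSub n, p.1 ⊆ q.1 → (A p ↪[L] A q)),
    (∀ p, A p ∈ K) →
    (∀ (p : ProperSub n) (h : p.1 ⊆ p.1), f p p h = Embedding.refl L (A p)) →
    (∀ (p q r : ProperSub n) (hpq : p.1 ⊆ q.1) (hqr : q.1 ⊆ r.1),
      f p r (hpq.trans hqr) = (f q r hqr).comp (f p q hpq)) →
    (∀ (p q r : ProperSub n) (hpr : p.1 ⊆ r.1) (hqr : q.1 ⊆ r.1),
      Set.range (f p r hpr) ∩ Set.range (f q r hqr)
        = Set.range (f (interP p q) r (Finset.inter_subset_left.trans hpr))) →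
    ∃ C ∈ K, ∃ g : ∀ p : ProperSub n, A p ↪[L] C,
      (∀ (p q : ProperSub n) (hpq : p.1 ⊆ q.1), (g q).comp (f p q hpq) = g p) ∧
      (∀ p q : ProperSub n,
        Set.range (g p) ∩ Set.range (g q) = Set.range (g (interP p q)))

section DSS

variable (L) [L.IsRelational]

/-- `qfClassSet L C0 c` is the set of elements `c'` such that the map fixing `C0`
pointwise and sending `c` to `c'` is an isomorphism from `C0 ∪ {c}` onto `C0 ∪ {c'}`. -/
def qfClassSet {C : Type w} [L.Structure C] (C0 : Set C) (c : C) : Set C :=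
  {c' | c' ∉ C0 ∧ ∀ ⦃m : ℕ⦄ (R : L.Relations m) (x x' : Fin m → C),
    (∀ i, (x i = c ∧ x' i = c') ∨ (x i ∈ C0 ∧ x' i = x i)) →
    (RelMap R x ↔ RelMap R x')}

/-- A class of structures is definably self-similar. -/
def DefinablySelfSimilar (K : StructClass L) : Prop :=
  ∀ A B C : Bundled.{0} L.Structure, A ∈ K → B ∈ K → C ∈ K →
    ∀ (f : A ↪[L] B) (C0 : Set C) (c : C), c ∉ C0 →
    ∀ g : A ↪[L] (qfClassSet L C0 c), ∃ D ∈ K, ∃ (j : C ↪[L] D)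
      (h : B ↪[L] (qfClassSet L (⇑j '' C0) (j c))),
      ∀ a : A, (h (f a) : D) = j (g a : C)

end DSS

/-- The class `K` has exactly one singleton structure up to isomorphism. -/
def UniqueSingleton (K : StructClass L) : Prop :=
  (∃ A ∈ K, Nonempty A ∧ Subsingleton A) ∧
  (∀ A B : Bundled.{0} L.Structure, A ∈ K → B ∈ K →
    Nonempty A → Subsingleton A → Nonempty B → Subsingleton B → Nonempty (A ≃[L] B))

/-- Ultrahomogeneity: every embedding of a finite substructure extends to an automorphism. -/
def Ultrahomogeneous (L : FirstOrder.Language.{u, v}) [L.IsRelational] (M : Type w)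
    [L.Structure M] : Prop :=
  ∀ s : Set M, s.Finite → ∀ f : s ↪[L] M, ∃ g : M ≃[L] M, ∀ x : s, g x = f x

/-- The class has countably many structures up to isomorphism. -/
def EssentiallyCountable (K : StructClass L) : Prop :=
  ∃ S : StructClass L, S.Countable ∧ ∀ A ∈ K, ∃ B ∈ S, Nonempty (A ≃[L] B)

/-- A Fraïssé class: nonempty, countably many members up to isomorphism, hereditary,
with the joint embedding and amalgamation properties. -/
def FraisseClass [L.IsRelational] (K : StructClass L) : Prop :=
  K.Nonempty ∧ EssentiallyCountable K ∧ HereditaryC K ∧ JEP K ∧ AP K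

/-- `M` is a Fraïssé limit of the class `K`: countable, ultrahomogeneous, with age `K`. -/
def IsFraisseLimitC [L.IsRelational] (K : StructClass L) (M : Type w) [L.Structure M] : Prop :=
  Countable M ∧ Ultrahomogeneous L M ∧ ageC L M = K

variable {L0 : FirstOrder.Language.{u0, v0}} {L1 : FirstOrder.Language.{u1, v1}}

/-- The language of the lexicographic product: the disjoint union of the two languages plus a
new binary relation symbol `E` (the unique relation symbol of `Language.graph`). -/
def lexLang (L0 : FirstOrder.Language.{u0, v0}) (L1 : FirstOrder.Language.{u1, v1}) :
    FirstOrder.Language :=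
  (L0.sum L1).sum Language.graph

/-- The language of the full product: the disjoint union of the two languages plus two
new binary relation symbols `E0` and `E1`. -/
def fullLang (L0 : FirstOrder.Language.{u0, v0}) (L1 : FirstOrder.Language.{u1, v1}) :
    FirstOrder.Language :=
  (L0.sum L1).sum (Language.graph.sum Language.graph)


instance lexLangIsRelational [L0.IsRelational] [L1.IsRelational] :
    (lexLang L0 L1).IsRelational :=
  inferInstanceAs (((L0.sum L1).sum Language.graph).IsRelational)

instance fullLangIsRelational [L0.IsRelational] [L1.IsRelational] :
    (fullLang L0 L1).IsRelational :=
  inferInstanceAs (((L0.sum L1).sum (Language.graph.sum Language.graph)).IsRelational)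

section Products

variable [L0.IsRelational] [L1.IsRelational]

/-- Interpretation of `L0` on a lexicographic product. -/
def lexStr0 {B : Type w} (A : B → Type w') [∀ b, L0.Structure (A b)] :
    L0.Structure (Σ b, A b) where
  funMap f _ := isEmptyElim f
  RelMap {n} R x := ∃ (b : B) (a : Fin n → A b), (∀ i, x i = ⟨b, a i⟩) ∧ RelMap R a

/-- Interpretation of `L1` on a lexicographic product. -/
def lexStr1 {B : Type w} [L1.Structure B] (A : B → Type w') :
    L1.Structure (Σ b, A b) where
  funMap f _ := isEmptyElim f
  RelMap R x := RelMap R fun i => (x i).1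

/-- Interpretation of the extra binary relation `E` on a lexicographic product. -/
def lexStrE {B : Type w} (A : B → Type w') : Language.graph.Structure (Σ b, A b) where
  funMap f _ := isEmptyElim f
  RelMap {n} R := match n, R with
    | _, .adj => fun x => (x 0).1 = (x 1).1

/-- The lexicographic product of the structures `A b` along `B`. -/
def lexStr {B : Type w} [L1.Structure B] (A : B → Type w') [∀ b, L0.Structure (A b)] :
    (lexLang L0 L1).Structure (Σ b, A b) :=
  @Language.sumStructure _ _ _
    (@Language.sumStructure _ _ _ (lexStr0 A) (lexStr1 A)) (lexStrE A)

/-- The lexicographic product `A ≀ B` of two structures (as a type). -/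
def lexProd (L0 : FirstOrder.Language.{u0, v0}) (L1 : FirstOrder.Language.{u1, v1})
    (A : Type w) (B : Type w') : Type max w w' :=
  Σ _ : B, A

instance lexProdStr (A : Type w) (B : Type w') [L0.Structure A] [L1.Structure B] :
    (lexLang L0 L1).Structure (lexProd L0 L1 A B) :=
  lexStr fun _ : B => A

/-- The lexicographic product of a family of bundled structures along a bundled structure. -/
def lexBundle (B : Bundled.{0} L1.Structure) (A : B → Bundled.{0} L0.Structure) :
    Bundled.{0} (lexLang L0 L1).Structure :=
  ⟨Σ b : B, A b, lexStr fun b => (A b : Type)⟩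

/-- The lexicographic product of two classes of structures. -/
def lexClass (K0 : StructClass L0) (K1 : StructClass L1) : StructClass (lexLang L0 L1) :=
  {C | ∃ B ∈ K1, ∃ A : B → Bundled.{0} L0.Structure, (∀ b, A b ∈ K0) ∧
    Nonempty (C ≃[lexLang L0 L1] lexBundle B A)}

/-- Interpretation of `L0` on a full product. -/
def fullStr0 (A : Type w) (B : Type w') [L0.Structure A] : L0.Structure (A × B) where
  funMap f _ := isEmptyElim f
  RelMap R x := RelMap R fun i => (x i).1

/-- Interpretation of `L1` on a full product. -/
def fullStr1 (A : Type w) (B : Type w') [L1.Structure B] : L1.Structure (A × B) where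
  funMap f _ := isEmptyElim f
  RelMap R x := RelMap R fun i => (x i).2

/-- Interpretation of `E0` on a full product. -/
def fullStrE0 (A : Type w) (B : Type w') : Language.graph.Structure (A × B) where
  funMap f _ := isEmptyElim f
  RelMap {n} R := match n, R with
    | _, .adj => fun x => (x 0).1 = (x 1).1

/-- Interpretation of `E1` on a full product. -/
def fullStrE1 (A : Type w) (B : Type w') : Language.graph.Structure (A × B) where
  funMap f _ := isEmptyElim f
  RelMap {n} R := match n, R with
    | _, .adj => fun x => (x 0).2 = (x 1).2

/-- The full product `A ⊠ B` of two structures, as a structure on `A × B`. -/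
def fullStr (A : Type w) (B : Type w') [L0.Structure A] [L1.Structure B] :
    (fullLang L0 L1).Structure (A × B) :=
  @Language.sumStructure _ _ _
    (@Language.sumStructure _ _ _ (fullStr0 A B) (fullStr1 A B))
    (@Language.sumStructure _ _ _ (fullStrE0 A B) (fullStrE1 A B))

/-- The full product `A ⊠ B` of two structures (as a type). -/
def fullProd (L0 : FirstOrder.Language.{u0, v0}) (L1 : FirstOrder.Language.{u1, v1})
    (A : Type w) (B : Type w') : Type max w w' :=
  A × B

instance fullProdStr (A : Type w) (B : Type w') [L0.Structure A] [L1.Structure B] :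
    (fullLang L0 L1).Structure (fullProd L0 L1 A B) :=
  fullStr A B

/-- The full product of two bundled structures. -/
def fullBundle (A : Bundled.{0} L0.Structure) (B : Bundled.{0} L1.Structure) :
    Bundled.{0} (fullLang L0 L1).Structure :=
  ⟨A × B, fullStr A B⟩

/-- The full product of two classes of structures. -/
def fullClass (K0 : StructClass L0) (K1 : StructClass L1) : StructClass (fullLang L0 L1) :=
  {C | Finite C ∧ ∃ A ∈ K0, ∃ B ∈ K1, Nonempty (C ↪[fullLang L0 L1] fullBundle A B)}

end Products

/-- The free superposition of two classes of structures: all finite structures in the disjoint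
union language whose reducts to the two languages lie in the respective classes. -/
def freeClass (K0 : StructClass L0) (K1 : StructClass L1) : StructClass (L0.sum L1) :=
  {C | Finite C ∧
    (⟨C, (LHom.sumInl (L := L0) (L' := L1)).reduct C⟩ : Bundled.{0} L0.Structure) ∈ K0 ∧
    (⟨C, (LHom.sumInr (L := L0) (L' := L1)).reduct C⟩ : Bundled.{0} L1.Structure) ∈ K1}

/-- A configuration of the class `K` into `M^n`: an interpretation of the relation symbols of
`L0` as `L`-formulas with parameters from `M`, together with maps `f_A : A → M^n` for `A ∈ K`,
such that each relation of each `A ∈ K` is defined by the corresponding formula. -/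
structure Config (L0 : FirstOrder.Language.{u0, v0}) (K : StructClass L0)
    (L : FirstOrder.Language.{u, v}) (M : Type w) [L.Structure M] (n : ℕ) where
  I : ∀ {m : ℕ}, L0.Relations m → L.Formula ((Fin m × Fin n) ⊕ M)
  f : ∀ (A : Bundled.{0} L0.Structure), A ∈ K → A → Fin n → M
  compat : ∀ (A : Bundled.{0} L0.Structure) (hA : A ∈ K) {m : ℕ} (R : L0.Relations m)
      (a : Fin m → A),
    RelMap R a ↔ (I R).Realize (Sum.elim (fun p => f A hA (a p.1) p.2) id)

/-- A configuration is injective if all the maps `f_A` are injective. -/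
def Config.Injective {K : StructClass L0} {L : FirstOrder.Language.{u, v}} {M : Type w}
    [L.Structure M] {n : ℕ} (c : Config L0 K L M n) : Prop :=
  ∀ (A : Bundled.{0} L0.Structure) (hA : A ∈ K), Function.Injective (c.f A hA)

/-- A complete theory `T` admits a `K`-configuration if some model of `T` admits a
`K`-configuration into some finite power. -/
def AdmitsConfig (K : StructClass L0) {L : FirstOrder.Language.{u, v}} (T : L.Theory) : Prop :=
  ∃ (M : Type max u v) (_ : L.Structure M), M ⊨ T ∧ ∃ n : ℕ, Nonempty (Config L0 K L M n)

/-- `T` has an infinite model. -/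
def HasInfiniteModel {L : FirstOrder.Language.{u, v}} (T : L.Theory) : Prop :=
  ∃ (M : Type max u v) (_ : L.Structure M), M ⊨ T ∧ Infinite M

/-- The binary relation of a `Language.graph`-structure. -/
def rel2 {M : Type w} [Language.graph.Structure M] (x y : M) : Prop :=
  RelMap Language.adj ![x, y]

/-- The class of all finite strict partial orders. -/
def POClass : StructClass Language.graph :=
  {A | Finite A ∧ (∀ x : A, ¬ rel2 x x) ∧ ∀ x y z : A, rel2 x y → rel2 y z → rel2 x z}

/-- The class of all finite tournaments. -/
def TournClass : StructClass Language.graph :=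
  {A | Finite A ∧ (∀ x : A, ¬ rel2 x x) ∧ ∀ x y : A, x ≠ y → Xor' (rel2 x y) (rel2 y x)}

/-- The class of all finite directed graphs. -/
def DGClass : StructClass Language.graph :=
  {A | Finite A ∧ ∀ x : A, ¬ rel2 x x}

/-- The class of all finite (simple) graphs. -/
def GClass : StructClass Language.graph :=
  {A | Finite A ∧ (∀ x : A, ¬ rel2 x x) ∧ ∀ x y : A, rel2 x y → rel2 y x}

/-! ### Auxiliary infrastructure for Statement 11 -/

section AgeLemmas

variable {L : FirstOrder.Language.{u, v}} [L.IsRelational] {M : Type w} [L.Structure M]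

/-- The inclusion of a subset (with the induced structure) as an embedding. -/
def setEmb (s : Set M) : s ↪[L] M where
  toFun := Subtype.val
  inj' := Subtype.val_injective
  map_fun' := fun f _ => isEmptyElim f
  map_rel' := fun _ _ => Iff.rfl

/-- Corestriction of an embedding to a subset containing its range. -/
def codRestrictEmb {A : Type w'} [L.Structure A] (s : Set M) (f : A ↪[L] M)
    (h : ∀ a, f a ∈ s) : A ↪[L] s where
  toFun a := ⟨f a, h a⟩
  inj' a b hab := f.injective (congrArg Subtype.val hab)
  map_fun' := fun g _ => isEmptyElim g
  map_rel' := fun r x => f.map_rel' r x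

/-- An embedding as an isomorphism onto its range. -/
noncomputable def equivRangeEmb {A : Type w'} [L.Structure A] (f : A ↪[L] M) :
    A ≃[L] (Set.range f : Set M) where
  toEquiv := Equiv.ofBijective (fun a => ⟨f a, Set.mem_range_self a⟩)
    ⟨fun a b h => f.injective (congrArg Subtype.val h),
      fun x => x.2.elim fun a ha => ⟨a, Subtype.ext ha⟩⟩
  map_fun' := fun g _ => isEmptyElim g
  map_rel' := fun r x => f.map_rel' r x

/-- An isomorphism between (the induced structures on) equal subsets. -/
def setIsoOfEq {s t : Set M} (h : s = t) : (s : Set M) ≃[L] t := by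
  subst h; exact Language.Equiv.refl L s

/-- A `Type 0` copy of a finite subset of `M`. -/
noncomputable def copyBundle (s : Set M) (hs : s.Finite) : Bundled.{0} L.Structure :=
  haveI := hs.to_subtype
  (Finite.equivFin s).bundledInduced L

/-- The isomorphism from a finite subset of `M` to its `Type 0` copy. -/
noncomputable def copyIso (s : Set M) (hs : s.Finite) :
    (s : Set M) ≃[L] copyBundle (L := L) s hs :=
  haveI := hs.to_subtype
  (Finite.equivFin s).bundledInducedEquiv L

lemma copyBundle_mem_age (s : Set M) (hs : s.Finite) :
    copyBundle (L := L) s hs ∈ ageC L M := by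
  haveI := hs.to_subtype
  exact ⟨Finite.of_equiv _ (copyIso s hs).toEquiv,
    ⟨(setEmb s).comp (copyIso s hs).symm.toEmbedding⟩⟩

lemma age_hereditary : HereditaryC (ageC L M) := by
  rintro A ⟨hfin, ⟨f⟩⟩ s
  haveI : Finite A := hfin
  exact ⟨inferInstance, ⟨f.comp (setEmb s)⟩⟩

lemma age_jep : JEP (ageC L M) := by
  rintro A ⟨hA, ⟨f⟩⟩ B ⟨hB, ⟨g⟩⟩
  haveI : Finite A := hA
  haveI : Finite B := hB
  have hsfin : (Set.range f ∪ Set.range g).Finite :=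
    (Set.finite_range f).union (Set.finite_range g)
  exact ⟨copyBundle _ hsfin, copyBundle_mem_age _ hsfin,
    ⟨(copyIso _ hsfin).toEmbedding.comp (codRestrictEmb _ f
      fun a => Set.mem_union_left _ (Set.mem_range_self a))⟩,
    ⟨(copyIso _ hsfin).toEmbedding.comp (codRestrictEmb _ g
      fun b => Set.mem_union_right _ (Set.mem_range_self b))⟩⟩

lemma age_essCountable [Countable M] : EssentiallyCountable (ageC L M) := by
  refine ⟨Set.range (fun t : Finset M => copyBundle (L := L) (↑t : Set M) t.finite_toSet),
    Set.countable_range _, ?_⟩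
  rintro A ⟨hA, ⟨f⟩⟩
  haveI : Finite A := hA
  have hr : (Set.range f).Finite := Set.finite_range f
  refine ⟨copyBundle (↑hr.toFinset : Set M) hr.toFinset.finite_toSet, ⟨hr.toFinset, rfl⟩, ?_⟩
  exact ⟨((copyIso _ _).comp (setIsoOfEq hr.coe_toFinset.symm)).comp (equivRangeEmb f)⟩

lemma age_ap (hUH : Ultrahomogeneous L M) : AP (ageC L M) := by
  rintro A B₀ B₁ ⟨hA, -⟩ ⟨hB₀, ⟨e₀⟩⟩ ⟨hB₁, ⟨e₁⟩⟩ f₀ f₁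
  haveI : Finite A := hA
  haveI : Finite B₀ := hB₀
  haveI : Finite B₁ := hB₁
  have hsfin : (Set.range (e₀.comp f₀)).Finite := Set.finite_range _
  set α := equivRangeEmb (e₀.comp f₀) with hα
  obtain ⟨g, hg⟩ := hUH _ hsfin ((e₁.comp f₁).comp α.symm.toEmbedding)
  have hufin : (Set.range (g.toEmbedding.comp e₀) ∪ Set.range e₁).Finite :=
    (Set.finite_range _).union (Set.finite_range _)
  refine ⟨copyBundle _ hufin, copyBundle_mem_age _ hufin,
    (copyIso _ hufin).toEmbedding.comp (codRestrictEmb _ (g.toEmbedding.comp e₀)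
      fun b => Set.mem_union_left _ (Set.mem_range_self b)),
    (copyIso _ hufin).toEmbedding.comp (codRestrictEmb _ e₁
      fun b => Set.mem_union_right _ (Set.mem_range_self b)), ?_⟩
  refine Embedding.ext fun a => ?_
  have key : g (e₀ (f₀ a)) = e₁ (f₁ a) := by
    have h1 := hg (α a)
    have h2 : α.symm (α a) = a := α.symm_apply_apply a
    calc g (e₀ (f₀ a)) = g ((α a : M)) := rfl
    _ = e₁ (f₁ (α.symm (α a))) := h1
    _ = e₁ (f₁ a) := by rw [h2]
  simp only [Embedding.comp_apply]
  exact congrArg (⇑(copyIso _ hufin)) (Subtype.ext key)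

end AgeLemmas
section ProductLemmas

variable {L0 : FirstOrder.Language.{u0, v0}} {L1 : FirstOrder.Language.{u1, v1}}
variable [L0.IsRelational] [L1.IsRelational]

/-- The full product of two embeddings. -/
def prodEmb {X0 : Type*} {Y0 : Type*} {X1 : Type*} {Y1 : Type*}
    [L0.Structure X0] [L0.Structure Y0] [L1.Structure X1] [L1.Structure Y1]
    (g0 : X0 ↪[L0] Y0) (g1 : X1 ↪[L1] Y1) :
    fullProd L0 L1 X0 X1 ↪[fullLang L0 L1] fullProd L0 L1 Y0 Y1 where
  toFun p := (g0 p.1, g1 p.2)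
  inj' p q h :=
    Prod.ext (g0.injective (congrArg Prod.fst h)) (g1.injective (congrArg Prod.snd h))
  map_fun' := fun f _ => isEmptyElim f
  map_rel' := by
    rintro n ((R | R) | (R | R)) x
    · exact g0.map_rel' R fun i => (x i).1
    · exact g1.map_rel' R fun i => (x i).2
    · cases R
      exact g0.injective.eq_iff
    · cases R
      exact g1.injective.eq_iff

/-- The full product of two isomorphisms. -/
def prodIso {X0 : Type*} {Y0 : Type*} {X1 : Type*} {Y1 : Type*}
    [L0.Structure X0] [L0.Structure Y0] [L1.Structure X1] [L1.Structure Y1]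
    (g0 : X0 ≃[L0] Y0) (g1 : X1 ≃[L1] Y1) :
    fullProd L0 L1 X0 X1 ≃[fullLang L0 L1] fullProd L0 L1 Y0 Y1 where
  toEquiv := Equiv.prodCongr g0.toEquiv g1.toEquiv
  map_fun' := fun f _ => isEmptyElim f
  map_rel' := by
    rintro n ((R | R) | (R | R)) x
    · exact g0.map_rel' R fun i => (x i).1
    · exact g1.map_rel' R fun i => (x i).2
    · cases R
      exact g0.injective.eq_iff
    · cases R
      exact g1.injective.eq_iff

variable {M0 : Type w} [L0.Structure M0] {M1 : Type w'} [L1.Structure M1]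

/-- Any embedding into a full product factors through the product of its coordinate
projections. -/
def projEmb {C : Type*} [(fullLang L0 L1).Structure C]
    (f : C ↪[fullLang L0 L1] fullProd L0 L1 M0 M1) :
    C ↪[fullLang L0 L1] fullProd L0 L1
      (Set.range fun c => (f c).1 : Set M0) (Set.range fun c => (f c).2 : Set M1) where
  toFun c := (⟨(f c).1, ⟨c, rfl⟩⟩, ⟨(f c).2, ⟨c, rfl⟩⟩)
  inj' c c' h := by
    apply f.injective
    have h1 : (f c).1 = (f c').1 := congrArg (fun p => (p.1 : M0)) h
    have h2 : (f c).2 = (f c').2 := congrArg (fun p => (p.2 : M1)) h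
    exact Prod.ext h1 h2
  map_fun' := fun g _ => isEmptyElim g
  map_rel' := by
    rintro n ((R | R) | (R | R)) x
    · exact f.map_rel' (Sum.inl (Sum.inl R)) x
    · exact f.map_rel' (Sum.inl (Sum.inr R)) x
    · cases R
      exact Iff.trans (by exact Subtype.ext_iff)
        (f.map_rel' (Sum.inr (Sum.inl .adj)) x)
    · cases R
      exact Iff.trans (by exact Subtype.ext_iff)
        (f.map_rel' (Sum.inr (Sum.inr .adj)) x)

end ProductLemmas
section MainLemmas

variable {L0 : FirstOrder.Language.{u0, v0}} {L1 : FirstOrder.Language.{u1, v1}}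
variable [L0.IsRelational] [L1.IsRelational]
variable {K0 : StructClass L0} {K1 : StructClass L1}
variable {M0 : Type w} [L0.Structure M0] {M1 : Type w'} [L1.Structure M1]

lemma fullBundle_mem (hfin0 : AllFinite K0) (hfin1 : AllFinite K1)
    {A : Bundled.{0} L0.Structure} {B : Bundled.{0} L1.Structure}
    (hA : A ∈ K0) (hB : B ∈ K1) : fullBundle A B ∈ fullClass K0 K1 := by
  haveI : Finite A := hfin0 A hA
  haveI : Finite B := hfin1 B hB
  exact ⟨inferInstanceAs (Finite (A × B)), A, hA, B, hB, ⟨Embedding.refl _ _⟩⟩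

lemma age_eq_fullClass (hM0 : IsFraisseLimitC K0 M0) (hM1 : IsFraisseLimitC K1 M1) :
    ageC (fullLang L0 L1) (fullProd L0 L1 M0 M1) = fullClass K0 K1 := by
  ext C
  constructor
  · rintro ⟨hC, ⟨f⟩⟩
    haveI : Finite C := hC
    have h0fin : (Set.range fun c => (f c).1 : Set M0).Finite := Set.finite_range _
    have h1fin : (Set.range fun c => (f c).2 : Set M1).Finite := Set.finite_range _
    refine ⟨hC, copyBundle _ h0fin, ?_, copyBundle _ h1fin, ?_, ?_⟩
    · rw [← hM0.2.2]; exact copyBundle_mem_age _ h0fin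
    · rw [← hM1.2.2]; exact copyBundle_mem_age _ h1fin
    · exact ⟨(prodEmb (copyIso _ h0fin).toEmbedding
        (copyIso _ h1fin).toEmbedding).comp (projEmb f)⟩
  · rintro ⟨hC, A, hA, B, hB, ⟨e⟩⟩
    rw [← hM0.2.2] at hA
    rw [← hM1.2.2] at hB
    obtain ⟨-, ⟨fA⟩⟩ := hA
    obtain ⟨-, ⟨fB⟩⟩ := hB
    exact ⟨hC, ⟨(prodEmb fA fB).comp e⟩⟩

lemma uh_prod (hUH0 : Ultrahomogeneous L0 M0) (hUH1 : Ultrahomogeneous L1 M1) :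
    Ultrahomogeneous (fullLang L0 L1) (fullProd L0 L1 M0 M1) := by
  classical
  intro s hs f
  have hE0 : ∀ p q : s, (f p).1 = (f q).1 ↔ (p.val).1 = (q.val).1 :=
    fun p q => f.map_rel' (Sum.inr (Sum.inl .adj)) ![p, q]
  have hE1 : ∀ p q : s, (f p).2 = (f q).2 ↔ (p.val).2 = (q.val).2 :=
    fun p q => f.map_rel' (Sum.inr (Sum.inr .adj)) ![p, q]
  have hw0 : ∀ a : (Prod.fst '' s : Set M0), ∃ p : s, (p.val).1 = (a : M0) := by
    rintro ⟨a, x, hx, hxa⟩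
    exact ⟨⟨x, hx⟩, hxa⟩
  choose p0 hp0 using hw0
  have hw1 : ∀ a : (Prod.snd '' s : Set M1), ∃ p : s, (p.val).2 = (a : M1) := by
    rintro ⟨a, x, hx, hxa⟩
    exact ⟨⟨x, hx⟩, hxa⟩
  choose p1 hp1 using hw1
  let e0 : (Prod.fst '' s : Set M0) ↪[L0] M0 :=
  { toFun := fun a => (f (p0 a)).1
    inj' := fun a b h => Subtype.ext (by rw [← hp0 a, ← hp0 b]; exact (hE0 _ _).mp h)
    map_fun' := fun g _ => isEmptyElim g
    map_rel' := by
      intro n R x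
      have h := f.map_rel' (Sum.inl (Sum.inl R)) (fun i => p0 (x i))
      refine h.trans (iff_of_eq (congrArg (RelMap R) ?_))
      exact funext fun i => hp0 (x i) }
  let e1 : (Prod.snd '' s : Set M1) ↪[L1] M1 :=
  { toFun := fun a => (f (p1 a)).2
    inj' := fun a b h => Subtype.ext (by rw [← hp1 a, ← hp1 b]; exact (hE1 _ _).mp h)
    map_fun' := fun g _ => isEmptyElim g
    map_rel' := by
      intro n R x
      have h := f.map_rel' (Sum.inl (Sum.inr R)) (fun i => p1 (x i))
      refine h.trans (iff_of_eq (congrArg (RelMap R) ?_))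
      exact funext fun i => hp1 (x i) }
  obtain ⟨g0, hg0⟩ := hUH0 _ (hs.image Prod.fst) e0
  obtain ⟨g1, hg1⟩ := hUH1 _ (hs.image Prod.snd) e1
  refine ⟨prodIso g0 g1, fun x => ?_⟩
  have hx0 : (x.val).1 ∈ (Prod.fst '' s : Set M0) := ⟨x.val, x.2, rfl⟩
  have hx1 : (x.val).2 ∈ (Prod.snd '' s : Set M1) := ⟨x.val, x.2, rfl⟩
  have h1 : g0 ((x.val).1) = (f x).1 :=
    (hg0 ⟨_, hx0⟩).trans ((hE0 (p0 ⟨_, hx0⟩) x).mpr (hp0 ⟨_, hx0⟩))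
  have h2 : g1 ((x.val).2) = (f x).2 :=
    (hg1 ⟨_, hx1⟩).trans ((hE1 (p1 ⟨_, hx1⟩) x).mpr (hp1 ⟨_, hx1⟩))
  exact Prod.ext h1 h2

end MainLemmas
/-- the full product of Fraïssé classes is a Fraïssé class, with the full
product of the limits as its Fraïssé limit. -/
theorem stmt11 (L0 : FirstOrder.Language.{u0, v0}) (L1 : FirstOrder.Language.{u1, v1})
    [L0.IsRelational] [L1.IsRelational]
    (K0 : StructClass L0) (K1 : StructClass L1)
    (hfin0 : AllFinite K0) (hiso0 : IsoClosed K0)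
    (hfin1 : AllFinite K1) (hiso1 : IsoClosed K1)
    (h0 : FraisseClass K0) (h1 : FraisseClass K1)
    (M0 : Type w) [L0.Structure M0] (M1 : Type w') [L1.Structure M1]
    (hM0 : IsFraisseLimitC K0 M0) (hM1 : IsFraisseLimitC K1 M1) :
    FraisseClass (fullClass K0 K1) ∧
      IsFraisseLimitC (fullClass K0 K1) (fullProd L0 L1 M0 M1) := by
  obtain ⟨hc0, hu0, ha0⟩ := hM0
  obtain ⟨hc1, hu1, ha1⟩ := hM1
  haveI : Countable M0 := hc0
  haveI : Countable M1 := hc1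
  have hage := age_eq_fullClass (K0 := K0) (K1 := K1) (M0 := M0) (M1 := M1)
    ⟨hc0, hu0, ha0⟩ ⟨hc1, hu1, ha1⟩
  have hUH := uh_prod hu0 hu1
  haveI hcnt : Countable (fullProd L0 L1 M0 M1) := inferInstanceAs (Countable (M0 × M1))
  obtain ⟨A, hA⟩ := h0.1
  obtain ⟨B, hB⟩ := h1.1
  refine ⟨⟨⟨fullBundle A B, fullBundle_mem hfin0 hfin1 hA hB⟩, ?_, ?_, ?_, ?_⟩, hcnt, hUH, hage⟩
  · rw [← hage]; exact age_essCountable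
  · rw [← hage]; exact age_hereditary
  · rw [← hage]; exact age_jep
  · rw [← hage]; exact age_ap hUH

end ProductsPaper
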